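/- Let α, β ∈ [0, +∞) and μ, ν ∈ (0, +∞). If t > 0 is a real number satisfying t^μ ≤ α + β/t^ν, then t ≤ (α + β^{μ/(μ+ν)})^{1/μ}. -/

import Mathlib

open Real

/-- Elementary lemma: if `t^μ ≤ α + β/t^ν` with `t > 0`, `α, β ≥ 0`, `μ, ν > 0`,
then `t ≤ (α + β^{μ/(μ+ν)})^{1/μ}`. -/
theorem elementary_power_bound (α β μ ν t : ℝ)
    (hα : 0 ≤ α) (hβ : 0 ≤ β) (hμ : 0 < μ) (hν : 0 < ν) (ht : 0 < t)
    (h : t ^ μ ≤ α + β / t ^ ν) :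
    t ≤ (α + β ^ (μ / (μ + ν))) ^ (1 / μ) := by
  have hμν : 0 < μ + ν := by linarith
  have key : t ^ μ ≤ α + β ^ (μ / (μ + ν)) := by
    rcases le_or_gt t (β ^ (1 / (μ + ν))) with hc | hc
    · have h1 : t ^ μ ≤ (β ^ (1 / (μ + ν))) ^ μ :=
        Real.rpow_le_rpow ht.le hc hμ.le
      rw [← Real.rpow_mul hβ] at h1
      have : 1 / (μ + ν) * μ = μ / (μ + ν) := by field_simp
      rw [this] at h1
      linarith
    · rcases eq_or_lt_of_le hβ with hβ0 | hβ0
      · have : β = 0 := hβ0.symm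
        subst this
        simp only [zero_div] at h
        have : (0:ℝ) ^ (μ / (μ + ν)) = 0 := Real.zero_rpow (by positivity)
        rw [this]
        linarith
      · have hb1 : β ^ (ν / (μ + ν)) ≤ t ^ ν := by
          have := Real.rpow_le_rpow (Real.rpow_nonneg hβ _) hc.le hν.le
          rwa [← Real.rpow_mul hβ, one_div,
            inv_mul_eq_div] at this
        have hbpos : (0:ℝ) < β ^ (ν / (μ + ν)) := Real.rpow_pos_of_pos hβ0 _
        have h2 : β / t ^ ν ≤ β / β ^ (ν / (μ + ν)) :=
          div_le_div_of_nonneg_left hβ hbpos hb1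
        have h3 : β / β ^ (ν / (μ + ν)) = β ^ (μ / (μ + ν)) := by
          rw [show μ / (μ + ν) = 1 - ν / (μ + ν) by field_simp; ring,
            Real.rpow_sub hβ0, Real.rpow_one]
        rw [h3] at h2
        linarith
  calc t = (t ^ μ) ^ (1 / μ) := by
        rw [← Real.rpow_mul ht.le, mul_one_div, div_self hμ.ne', Real.rpow_one]
    _ ≤ (α + β ^ (μ / (μ + ν))) ^ (1 / μ) :=
        Real.rpow_le_rpow (Real.rpow_nonneg ht.le _) key (by positivity)
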